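/- Let 0 < p < ∞ and let w be a log-convex weight on [0, ∞). Then there is a constant C > 0 such that w(r) ≤ C (r+1) w̃_p(r) for all 0 ≤ r < ∞. -/

import Mathlib

open Complex MeasureTheory Real Set Filter
open scoped ENNReal Topology

noncomputable section

/-- The domain: disk of radius `rmax` (`rmax = 1` is the unit disk, `rmax = ⊤` is ℂ). -/
def Dom (rmax : ℝ≥0∞) : Set ℂ := {z : ℂ | ENNReal.ofReal ‖z‖ < rmax}

/-- The integral mean `M_p(f, r)` for `0 < p < ∞`. -/
def Mp (p : ℝ) (f : ℂ → ℂ) (r : ℝ) : ℝ :=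
  ((1 / (2 * π)) * ∫ θ in (0:ℝ)..(2 * π), ‖f ((r : ℂ) * Complex.exp ((θ : ℂ) * Complex.I))‖ ^ p)
    ^ (1 / p)

/-- The sup mean `M_∞(f, r)`. -/
def Minf (f : ℂ → ℂ) (r : ℝ) : ℝ :=
  ⨆ θ : ℝ, ‖f ((r : ℂ) * Complex.exp ((θ : ℂ) * Complex.I))‖

/-- A weight on `[0, rmax)`: positive, non-decreasing, continuous, unbounded. -/
structure IsWeight (rmax : ℝ≥0∞) (w : ℝ → ℝ) : Prop where
  pos : ∀ r, 0 ≤ r → ENNReal.ofReal r < rmax → 0 < w r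
  mono : ∀ r s, 0 ≤ r → r ≤ s → ENNReal.ofReal s < rmax → w r ≤ w s
  cont : ContinuousOn w {r : ℝ | 0 ≤ r ∧ ENNReal.ofReal r < rmax}
  unbdd : ∀ M : ℝ, ∃ r, 0 ≤ r ∧ ENNReal.ofReal r < rmax ∧ M < w r

/-- `log w(e^x)` is convex on the appropriate interval. -/
def LogConvexOn (rmax : ℝ≥0∞) (w : ℝ → ℝ) : Prop :=
  ConvexOn ℝ {x : ℝ | ENNReal.ofReal (Real.exp x) < rmax}
    (fun x => Real.log (w (Real.exp x)))

/-- The integration operator `J f(z) = ∫₀^z f(ζ) dζ` (along the segment from 0 to z). -/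
def Jop (f : ℂ → ℂ) (z : ℂ) : ℂ := ∫ t in (0:ℝ)..1, z * f ((t : ℂ) * z)

/-- The associated weight `w̃` (for `p = ∞`). -/
def assocInf (rmax : ℝ≥0∞) (w : ℝ → ℝ) (t : ℝ) : ℝ :=
  sSup {m : ℝ | ∃ f : ℂ → ℂ, DifferentiableOn ℂ f (Dom rmax) ∧
    (∀ r, 0 ≤ r → ENNReal.ofReal r < rmax → Minf f r ≤ w r) ∧ m = Minf f t}

/-- The `p`-associated weight `w̃_p` for `0 < p < ∞`. -/
def assocP (rmax : ℝ≥0∞) (p : ℝ) (w : ℝ → ℝ) (t : ℝ) : ℝ :=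
  sSup {m : ℝ | ∃ f : ℂ → ℂ, DifferentiableOn ℂ f (Dom rmax) ∧
    (∀ r, 0 ≤ r → ENNReal.ofReal r < rmax → Mp p f r ≤ w r) ∧ m = Mp p f t}

/-- `Mp` of a function with constant modulus `a` on the circle of radius `t` equals `a`. -/
lemma Mp_circle_const (p : ℝ) (hp : 0 < p) (f : ℂ → ℂ) (t a : ℝ) (ha : 0 ≤ a)
    (hf : ∀ θ : ℝ, ‖f ((t : ℂ) * Complex.exp ((θ : ℂ) * Complex.I))‖ = a) :
    Mp p f t = a := by
  have hπ := Real.pi_pos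
  unfold Mp
  have h1 : (∫ θ in (0:ℝ)..(2 * π), ‖f ((t : ℂ) * Complex.exp ((θ : ℂ) * Complex.I))‖ ^ p)
      = ∫ _θ in (0:ℝ)..(2 * π), a ^ p :=
    intervalIntegral.integral_congr fun θ _ => by rw [hf]
  rw [h1, intervalIntegral.integral_const, smul_eq_mul]
  have h2 : 1 / (2 * π) * ((2 * π - 0) * a ^ p) = a ^ p := by
    rw [sub_zero, ← mul_assoc, one_div, inv_mul_cancel₀ (by positivity), one_mul]
  rw [h2, one_div, Real.rpow_rpow_inv ha hp.ne']

lemma Mp_monomial (p : ℝ) (hp : 0 < p) (c t : ℝ) (hc : 0 ≤ c) (ht : 0 ≤ t) (n : ℕ) :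
    Mp p (fun z => (c : ℂ) * z ^ n) t = c * t ^ n := by
  refine Mp_circle_const p hp _ t _ (by positivity) fun θ => ?_
  have h1 : ‖Complex.exp ((θ : ℂ) * Complex.I)‖ = 1 := by
    rw [Complex.norm_exp]
    simp
  rw [norm_mul, norm_pow, norm_mul, h1, mul_one]
  simp [_root_.abs_of_nonneg hc, _root_.abs_of_nonneg ht]

/-- A supporting line from the right for a convex function, valid on `[0, ∞)`. -/
lemma exists_subgrad {φ : ℝ → ℝ} (hφ : ConvexOn ℝ Set.univ φ) {t0 : ℝ} (ht0 : 0 < t0)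
    (hm : φ 0 ≤ φ t0) :
    ∃ k : ℝ, 0 ≤ k ∧ ∀ t, 0 ≤ t → φ t0 + k * (t - t0) ≤ φ t := by
  set S : Set ℝ := (fun t => (φ t0 - φ t) / (t0 - t)) '' Set.Ico 0 t0 with hS
  have h0mem : (φ t0 - φ 0) / (t0 - 0) ∈ S := ⟨0, ⟨le_refl 0, ht0⟩, rfl⟩
  have hne : S.Nonempty := ⟨_, h0mem⟩
  have hbdd : BddAbove S := by
    refine ⟨φ (t0 + 1) - φ t0, ?_⟩
    rintro x ⟨t, ⟨ht, htlt⟩, rfl⟩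
    have h := hφ.slope_mono_adjacent (Set.mem_univ t) (Set.mem_univ (t0 + 1)) htlt
      (by linarith)
    simpa using h
  refine ⟨sSup S, ?_, ?_⟩
  · have h := le_csSup hbdd h0mem
    have hpos : 0 ≤ (φ t0 - φ 0) / (t0 - 0) := div_nonneg (by linarith) (by linarith)
    linarith
  · intro t ht
    rcases lt_trichotomy t t0 with h | h | h
    · have hmem : (φ t0 - φ t) / (t0 - t) ∈ S := ⟨t, ⟨ht, h⟩, rfl⟩
      have hk := le_csSup hbdd hmem
      have h2 : 0 < t0 - t := by linarith
      rw [div_le_iff₀ h2] at hk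
      nlinarith
    · subst h; simp
    · have hub : ∀ x ∈ S, x ≤ (φ t - φ t0) / (t - t0) := by
        rintro x ⟨s, ⟨hs, hslt⟩, rfl⟩
        exact hφ.slope_mono_adjacent (Set.mem_univ s) (Set.mem_univ t) hslt h
      have hk := csSup_le hne hub
      have h2 : 0 < t - t0 := by linarith
      rw [le_div_iff₀ h2] at hk
      nlinarith

/-- for a log-convex weight `w` on `[0,∞)`, `w(r) ≤ C (r+1) w̃_p(r)`. -/
theorem stmt_7 (p : ℝ) (hp : 0 < p) (w : ℝ → ℝ)
    (hw : IsWeight ⊤ w)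
    (hgrowth : (fun r : ℝ => Real.log r) =o[atTop] (fun r => Real.log (w r)))
    (hlc : LogConvexOn ⊤ w) :
    ∃ C > 0, ∀ r : ℝ, 0 ≤ r → w r ≤ C * (r + 1) * assocP ⊤ p w r := by
  have hπ := Real.pi_pos
  have hwpos : ∀ r : ℝ, 0 ≤ r → 0 < w r := fun r hr => hw.pos r hr (by simp)
  have hwmono : ∀ r s : ℝ, 0 ≤ r → r ≤ s → w r ≤ w s := fun r s hr hrs =>
    hw.mono r s hr hrs (by simp)
  set φ : ℝ → ℝ := fun x => Real.log (w (Real.exp x)) with hφdef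
  have hset : {x : ℝ | ENNReal.ofReal (Real.exp x) < ⊤} = Set.univ :=
    Set.eq_univ_of_forall fun x => ENNReal.ofReal_lt_top
  have hconv : ConvexOn ℝ Set.univ φ := by
    have h := hlc; unfold LogConvexOn at h; rwa [hset] at h
  -- admissible monomials give lower bounds for the associated weight
  have hadm : ∀ r : ℝ, 0 ≤ r → ∀ c : ℝ, 0 ≤ c → ∀ n : ℕ,
      (∀ s, 0 ≤ s → c * s ^ n ≤ w s) → c * r ^ n ≤ assocP ⊤ p w r := by
    intro r hr c hc n hle
    have hMp : ∀ s : ℝ, 0 ≤ s → Mp p (fun z => (c : ℂ) * z ^ n) s = c * s ^ n :=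
      fun s hs => Mp_monomial p hp c s hc hs n
    unfold assocP
    have hbdd : BddAbove {m : ℝ | ∃ f : ℂ → ℂ, DifferentiableOn ℂ f (Dom ⊤) ∧
        (∀ r', 0 ≤ r' → ENNReal.ofReal r' < ⊤ → Mp p f r' ≤ w r') ∧ m = Mp p f r} := by
      refine ⟨w r, ?_⟩
      rintro m ⟨f, _, hfle, rfl⟩
      exact hfle r hr (by simp)
    refine le_csSup hbdd ?_
    refine ⟨fun z => (c : ℂ) * z ^ n, ?_, ?_, (hMp r hr).symm⟩
    · exact ((differentiable_pow n).const_mul _).differentiableOn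
    · intro s hs _
      rw [hMp s hs]
      exact hle s hs
  set C : ℝ := max 1 (w 1 / w 0) with hC
  have hC1 : (1 : ℝ) ≤ C := le_max_left _ _
  have hC0 : 0 < C := lt_of_lt_of_le one_pos hC1
  have hw0 : 0 < w 0 := hwpos 0 le_rfl
  have hw1C : w 1 ≤ C * w 0 := by
    have h := le_max_right 1 (w 1 / w 0)
    rw [div_le_iff₀ hw0] at h
    exact h.trans (by rw [hC])
  refine ⟨C, hC0, ?_⟩
  intro r hr
  have hconst : w 0 * r ^ 0 ≤ assocP ⊤ p w r := by
    refine hadm r hr (w 0) hw0.le 0 fun s hs => ?_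
    simpa using hwmono 0 s le_rfl hs
  simp only [pow_zero, mul_one] at hconst
  rcases le_or_gt r 1 with hr1 | hr1
  · -- small radii: use the constant function
    have h1 : w r ≤ w 1 := hwmono r 1 hr hr1
    have hA0 : 0 < assocP ⊤ p w r := lt_of_lt_of_le hw0 hconst
    calc w r ≤ w 1 := h1
      _ ≤ C * w 0 := hw1C
      _ ≤ C * assocP ⊤ p w r := mul_le_mul_of_nonneg_left hconst hC0.le
      _ = C * 1 * assocP ⊤ p w r := by ring
      _ ≤ C * (r + 1) * assocP ⊤ p w r := by
          apply mul_le_mul_of_nonneg_right _ hA0.le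
          apply mul_le_mul_of_nonneg_left _ hC0.le
          linarith
  · -- large radii: use a monomial coming from a supporting line of `φ`
    have hr0 : (0 : ℝ) < r := lt_trans one_pos hr1
    set t0 : ℝ := Real.log r with ht0def
    have ht0 : 0 < t0 := Real.log_pos hr1
    have hexpt0 : Real.exp t0 = r := Real.exp_log hr0
    have hφt0 : φ t0 = Real.log (w r) := by rw [hφdef]; simp [hexpt0]
    have hφ0 : φ 0 = Real.log (w 1) := by rw [hφdef]; simp
    have hφ01 : φ 0 ≤ φ t0 := by
      rw [hφ0, hφt0]
      exact Real.log_le_log (hwpos 1 one_pos.le) (hwmono 1 r one_pos.le hr1.le)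
    obtain ⟨k, hk0, hkle⟩ := exists_subgrad hconv ht0 hφ01
    set n : ℕ := ⌊k⌋₊ with hn
    have hn1 : (n : ℝ) ≤ k := Nat.floor_le hk0
    have hn2 : k < (n : ℝ) + 1 := Nat.lt_floor_add_one k
    set c : ℝ := w r / r ^ k with hcdef
    have hrk : (0 : ℝ) < r ^ k := Real.rpow_pos_of_pos hr0 k
    have hc : 0 < c := div_pos (hwpos r hr) hrk
    have hgrow : ∀ s : ℝ, 1 ≤ s → c * s ^ k ≤ w s := by
      intro s hs
      have hs0 : (0 : ℝ) < s := lt_of_lt_of_le one_pos hs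
      have hkey := hkle (Real.log s) (Real.log_nonneg hs)
      have hφs : φ (Real.log s) = Real.log (w s) := by
        rw [hφdef]; simp [Real.exp_log hs0]
      rw [hφt0, hφs] at hkey
      have hlog : Real.log (c * s ^ k) ≤ Real.log (w s) := by
        rw [Real.log_mul hc.ne' (Real.rpow_pos_of_pos hs0 k).ne', hcdef,
          Real.log_div (hwpos r hr).ne' hrk.ne', Real.log_rpow hr0, Real.log_rpow hs0]
        linarith
      exact (Real.log_le_log_iff (by positivity) (hwpos s hs0.le)).mp hlog
    have hc1 : c ≤ w 1 := by
      have h := hgrow 1 le_rfl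
      simpa [Real.one_rpow] using h
    set c2 : ℝ := min c (w 0) with hc2def
    have hc2 : 0 < c2 := lt_min hc hw0
    have hadm2 : ∀ s : ℝ, 0 ≤ s → c2 * s ^ n ≤ w s := by
      intro s hs
      rcases le_or_gt s 1 with hs1 | hs1
      · have h1 : c2 * s ^ n ≤ w 0 * 1 :=
          mul_le_mul (min_le_right _ _) (pow_le_one₀ hs hs1) (by positivity) hw0.le
        have h2 : w 0 ≤ w s := hwmono 0 s le_rfl hs
        linarith
      · have hs0 : (0 : ℝ) < s := lt_trans one_pos hs1
        have h1 : (s : ℝ) ^ n ≤ s ^ k := by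
          rw [← Real.rpow_natCast s n]
          exact Real.rpow_le_rpow_of_exponent_le hs1.le hn1
        calc c2 * s ^ n ≤ c * s ^ k :=
              mul_le_mul (min_le_left _ _) h1 (by positivity) hc.le
          _ ≤ w s := hgrow s hs1.le
    have hA : c2 * r ^ n ≤ assocP ⊤ p w r := hadm r hr c2 hc2.le n hadm2
    have hcC : c ≤ C * c2 := by
      rcases le_total c (w 0) with h | h
      · rw [hc2def, min_eq_left h]
        nlinarith
      · rw [hc2def, min_eq_right h]
        linarith
    -- w r = c * r ^ k ≤ c * r * r ^ n ≤ C * (r+1) * (c2 * r^n) ≤ C * (r+1) * assocP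
    have hwr : w r = c * r ^ k := by
      rw [hcdef]; field_simp
    have hk1 : r ^ k ≤ r * r ^ n := by
      have h1 : r ^ k ≤ r ^ ((n : ℝ) + 1) :=
        Real.rpow_le_rpow_of_exponent_le hr1.le hn2.le
      have h2 : r ^ ((n : ℝ) + 1) = r * r ^ n := by
        rw [show ((n : ℝ) + 1) = ((n + 1 : ℕ) : ℝ) by push_cast; ring,
          Real.rpow_natCast, pow_succ]
        ring
      linarith [h2 ▸ h1]
    have hrn : (0 : ℝ) ≤ r ^ n := by positivity
    have hAss : 0 < assocP ⊤ p w r := lt_of_lt_of_le hw0 hconst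
    calc w r = c * r ^ k := hwr
      _ ≤ c * (r * r ^ n) := mul_le_mul_of_nonneg_left hk1 hc.le
      _ ≤ (C * c2) * (r * r ^ n) :=
          mul_le_mul_of_nonneg_right hcC (by positivity)
      _ = C * r * (c2 * r ^ n) := by ring
      _ ≤ C * (r + 1) * (c2 * r ^ n) := by
          apply mul_le_mul_of_nonneg_right _ (by positivity)
          apply mul_le_mul_of_nonneg_left _ hC0.le
          linarith
      _ ≤ C * (r + 1) * assocP ⊤ p w r := by
          apply mul_le_mul_of_nonneg_left hA
          have : (0:ℝ) ≤ r + 1 := by linarith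
          positivity
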